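/- Let p, N ≥ 1, K ≥ 1, λ ≥ 0, let x_1,…,x_N ∈ ℝ^p, and let w_1,…,w_N be nonnegative reals with ∑_{n=1}^N w_n > 0. Let γ_kn ≥ 0 satisfy ∑_{k=1}^K γ_kn = 1 for each n, and assume a_k := ∑_{n=1}^N γ_kn w_n > 0 for each k. Let φ(x | μ, Θ) = (2π)^{−p/2} (det Θ)^{1/2} exp(−(1/2)(x − μ)ᵀ Θ (x − μ)) denote the p-variate Gaussian density with mean μ and precision matrix Θ, and let ‖Θ‖_{1,off} = ∑_{i ≠ j} |Θ_ij| denote the entrywise ℓ_1 norm of the off-diagonal entries. Define π̂_k = a_k / ∑_{n=1}^N w_n, μ̂_k = (1/a_k) ∑_{n=1}^N γ_kn w_n x_n, and Â_k = ∑_{n=1}^N (γ_kn w_n / a_k) (x_n − μ̂_k)(x_n − μ̂_k)ᵀ, and suppose for each k that Θ̂_k is a symmetric positive definite matrix maximizing log det Θ − tr(Θ Â_k) − (2Nλ / a_k) ‖Θ‖_{1,off} over symmetric positive definite matrices Θ. Then (π̂, μ̂, Θ̂) maximizes Q(ρ, m, S) = (1/N) ∑_{n=1}^N ∑_{k=1}^K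 γ_kn [ log ρ_k + log φ(x_n | m_k, S_k) ] w_n − λ ∑_{k=1}^K ‖S_k‖_{1,off} over all (ρ, m, S) with ρ_k > 0 for all k, ∑_{k=1}^K ρ_k = 1, and each S_k symmetric positive definite. -/

import Mathlib

open BigOperators Matrix

/-- The `p`-variate Gaussian density with mean `μ` and precision matrix `Θ`. -/
noncomputable def gaussDensity (p : ℕ) (μ : Fin p → ℝ) (Θ : Matrix (Fin p) (Fin p) ℝ)
    (x : Fin p → ℝ) : ℝ :=
  (2 * Real.pi) ^ (-(p : ℝ) / 2) * Real.sqrt Θ.det *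
    Real.exp (-(1 / 2) * ((x - μ) ⬝ᵥ Θ *ᵥ (x - μ)))

/-- The entrywise ℓ₁ norm of the off-diagonal entries of a matrix. -/
def offDiagL1 (p : ℕ) (Θ : Matrix (Fin p) (Fin p) ℝ) : ℝ :=
  ∑ i, ∑ j, if i ≠ j then |Θ i j| else 0

theorem gibbs_aux (K : ℕ) (a ρ : Fin K → ℝ) (W : ℝ) (hW : 0 < W)
    (hapos : ∀ k, 0 < a k) (hρ : ∀ k, 0 < ρ k) (hρ1 : ∑ k, ρ k = 1)
    (haW : ∑ k, a k = W) :
    ∑ k, a k * Real.log (ρ k) ≤ ∑ k, a k * Real.log (a k / W) := by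
  have h : ∑ k, (a k * Real.log (ρ k) - a k * Real.log (a k / W)) ≤ 0 := by
    have hle : ∀ k ∈ Finset.univ, a k * Real.log (ρ k) - a k * Real.log (a k / W)
        ≤ ρ k * W - a k := by
      intro k _
      have ha0 : a k ≠ 0 := ne_of_gt (hapos k)
      have hW0 : W ≠ 0 := ne_of_gt hW
      have h1 : Real.log (ρ k) - Real.log (a k / W) = Real.log (ρ k * W / a k) := by
        rw [Real.log_div ha0 hW0, Real.log_div (mul_ne_zero (ne_of_gt (hρ k)) hW0) ha0,
          Real.log_mul (ne_of_gt (hρ k)) hW0]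
        ring
      have ht : 0 < ρ k * W / a k := div_pos (mul_pos (hρ k) hW) (hapos k)
      have h2 := Real.log_le_sub_one_of_pos ht
      have h3 : a k * (Real.log (ρ k) - Real.log (a k / W)) ≤ a k * (ρ k * W / a k - 1) :=
        mul_le_mul_of_nonneg_left (h1 ▸ h2) (hapos k).le
      have h4 : a k * (ρ k * W / a k - 1) = ρ k * W - a k := by field_simp
      nlinarith
    calc ∑ k, (a k * Real.log (ρ k) - a k * Real.log (a k / W))
        ≤ ∑ k, (ρ k * W - a k) := Finset.sum_le_sum hle
      _ = 0 := by rw [Finset.sum_sub_distrib, ← Finset.sum_mul, hρ1, one_mul, haW]; ring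
  rw [Finset.sum_sub_distrib] at h
  linarith

theorem log_gauss_aux (p : ℕ) (μ : Fin p → ℝ) (Θ : Matrix (Fin p) (Fin p) ℝ)
    (hΘ : Θ.PosDef) (x : Fin p → ℝ) :
    Real.log (gaussDensity p μ Θ x)
      = (-(p : ℝ) / 2) * Real.log (2 * Real.pi) + (1 / 2) * Real.log Θ.det
        - (1 / 2) * ((x - μ) ⬝ᵥ Θ *ᵥ (x - μ)) := by
  have hdet : 0 < Θ.det := hΘ.det_pos
  have h2π : (0:ℝ) < 2 * Real.pi := by positivity
  unfold gaussDensity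
  rw [Real.log_mul (by positivity) (Real.exp_ne_zero _),
    Real.log_mul (by positivity) (ne_of_gt (Real.sqrt_pos.mpr hdet)),
    Real.log_rpow h2π, Real.log_sqrt hdet.le, Real.log_exp]
  ring

theorem quad_decomp_aux (p N : ℕ) (c : Fin N → ℝ) (a : ℝ) (hA : a = ∑ n, c n) (ha : 0 < a)
    (x : Fin N → Fin p → ℝ)
    (μ : Fin p → ℝ) (hμ : μ = (1 / a) • ∑ n, (c n) • x n)
    (A : Matrix (Fin p) (Fin p) ℝ)
    (hAdef : A = ∑ n, (c n / a) • (Matrix.of fun i j => (x n i - μ i) * (x n j - μ j)))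
    (m : Fin p → ℝ) (S : Matrix (Fin p) (Fin p) ℝ) :
    ∑ n, c n * ((x n - m) ⬝ᵥ S *ᵥ (x n - m))
      = a * (S * A).trace + a * ((μ - m) ⬝ᵥ S *ᵥ (μ - m)) := by
  have ha0 : a ≠ 0 := ne_of_gt ha
  have μeq : ∀ i, a * μ i = ∑ n, c n * x n i := by
    intro i
    rw [hμ]
    simp only [Pi.smul_apply, Finset.sum_apply, smul_eq_mul]
    field_simp
  have Aeq : ∀ i j, a * A i j = ∑ n, c n * (x n i - μ i) * (x n j - μ j) := by
    intro i j
    rw [hAdef]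
    simp only [Finset.sum_apply, Matrix.sum_apply, Pi.smul_apply, Matrix.smul_apply,
      Matrix.of_apply, smul_eq_mul]
    rw [Finset.mul_sum]
    congr 1; ext n
    field_simp
  have Eij : ∀ i j, ∑ n, c n * ((x n i - m i) * (x n j - m j))
      = a * A i j + a * ((μ i - m i) * (μ j - m j)) := by
    intro i j
    have expand : ∀ n, c n * ((x n i - m i) * (x n j - m j))
        = c n * (x n i - μ i) * (x n j - μ j)
          + (c n * x n i - c n * μ i) * (μ j - m j)
          + (μ i - m i) * (c n * x n j - c n * μ j)
          + c n * ((μ i - m i) * (μ j - m j)) := by intro n; ring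
    rw [Finset.sum_congr rfl (fun n _ => expand n)]
    rw [Finset.sum_add_distrib, Finset.sum_add_distrib, Finset.sum_add_distrib]
    rw [Aeq i j]
    have h2 : ∑ n, (c n * x n i - c n * μ i) * (μ j - m j) = 0 := by
      rw [← Finset.sum_mul, Finset.sum_sub_distrib, ← Finset.sum_mul, ← μeq i, ← hA]
      ring_nf
    have h3 : ∑ n, (μ i - m i) * (c n * x n j - c n * μ j) = 0 := by
      rw [← Finset.mul_sum, Finset.sum_sub_distrib, ← Finset.sum_mul, ← μeq j, ← hA]
      ring_nf
    rw [h2, h3, ← Finset.sum_mul, ← hA]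
    ring
  have qf : ∀ (v : Fin p → ℝ), v ⬝ᵥ S *ᵥ v = ∑ i, ∑ j, S i j * (v i * v j) := by
    intro v
    simp only [dotProduct, Matrix.mulVec, dotProduct, Finset.mul_sum]
    apply Finset.sum_congr rfl; intro i _
    apply Finset.sum_congr rfl; intro j _
    ring
  have tr : (S * A).trace = ∑ i, ∑ j, S i j * A i j := by
    rw [Matrix.trace]
    congr 1; ext i
    rw [Matrix.diag_apply, Matrix.mul_apply]
    congr 1; ext j
    have : A j i = A i j := by
      have : a * A j i = a * A i j := by rw [Aeq i j, Aeq j i]; congr 1; ext n; ring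
      exact mul_left_cancel₀ ha0 this
    rw [this]
  calc ∑ n, c n * ((x n - m) ⬝ᵥ S *ᵥ (x n - m))
      = ∑ n, c n * ∑ i, ∑ j, S i j * ((x n i - m i) * (x n j - m j)) := by
        apply Finset.sum_congr rfl; intro n _
        rw [qf (x n - m)]; simp [Pi.sub_apply]
    _ = ∑ n, ∑ i, ∑ j, c n * (S i j * ((x n i - m i) * (x n j - m j))) := by
        apply Finset.sum_congr rfl; intro n _
        rw [Finset.mul_sum]
        apply Finset.sum_congr rfl; intro i _
        rw [Finset.mul_sum]
    _ = ∑ i, ∑ j, S i j * ∑ n, c n * ((x n i - m i) * (x n j - m j)) := by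
        rw [Finset.sum_comm]
        apply Finset.sum_congr rfl; intro i _
        rw [Finset.sum_comm]
        apply Finset.sum_congr rfl; intro j _
        rw [Finset.mul_sum]
        apply Finset.sum_congr rfl; intro n _
        ring
    _ = ∑ i, ∑ j, S i j * (a * A i j + a * ((μ i - m i) * (μ j - m j))) := by
        apply Finset.sum_congr rfl; intro i _
        apply Finset.sum_congr rfl; intro j _
        rw [Eij i j]
    _ = a * (S * A).trace + a * ((μ - m) ⬝ᵥ S *ᵥ (μ - m)) := by
        rw [tr, qf (μ - m)]
        simp only [Pi.sub_apply, Finset.mul_sum, Finset.sum_add_distrib]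
        rw [← Finset.sum_add_distrib]
        apply Finset.sum_congr rfl; intro i _
        rw [← Finset.sum_add_distrib]
        apply Finset.sum_congr rfl; intro j _
        ring

theorem m_step_correctness (p N K : ℕ) (hp : 1 ≤ p) (hN : 1 ≤ N) (hK : 1 ≤ K)
    (lam : ℝ) (hlam : 0 ≤ lam) (x : Fin N → Fin p → ℝ)
    (w : Fin N → ℝ) (hw : ∀ n, 0 ≤ w n) (hW : 0 < ∑ n, w n)
    (γ : Fin K → Fin N → ℝ) (hγ : ∀ k n, 0 ≤ γ k n) (hγ1 : ∀ n, ∑ k, γ k n = 1)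
    (ha : ∀ k, 0 < ∑ n, γ k n * w n)
    (Θhat : Fin K → Matrix (Fin p) (Fin p) ℝ) :
    let a : Fin K → ℝ := fun k => ∑ n, γ k n * w n
    let πhat : Fin K → ℝ := fun k => a k / ∑ n, w n
    let μhat : Fin K → Fin p → ℝ := fun k => (1 / a k) • ∑ n, (γ k n * w n) • x n
    let Ahat : Fin K → Matrix (Fin p) (Fin p) ℝ := fun k =>
      ∑ n, (γ k n * w n / a k) •
        (Matrix.of fun i j => (x n i - μhat k i) * (x n j - μhat k j))
    let Q : (Fin K → ℝ) → (Fin K → Fin p → ℝ) → (Fin K → Matrix (Fin p) (Fin p) ℝ) → ℝ :=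
      fun ρ m S =>
        (1 / (N : ℝ)) * (∑ n, ∑ k,
            γ k n * (Real.log (ρ k) + Real.log (gaussDensity p (m k) (S k) (x n))) * w n)
          - lam * ∑ k, offDiagL1 p (S k)
    (∀ k, (Θhat k).PosDef ∧
        ∀ S : Matrix (Fin p) (Fin p) ℝ, S.PosDef →
          Real.log S.det - (S * Ahat k).trace - (2 * N * lam / a k) * offDiagL1 p S ≤
            Real.log (Θhat k).det - (Θhat k * Ahat k).trace
              - (2 * N * lam / a k) * offDiagL1 p (Θhat k)) →
      ∀ (ρ : Fin K → ℝ) (m : Fin K → Fin p → ℝ) (S : Fin K → Matrix (Fin p) (Fin p) ℝ),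
        (∀ k, 0 < ρ k) → (∑ k, ρ k = 1) → (∀ k, (S k).PosDef) →
        Q ρ m S ≤ Q πhat μhat Θhat := by
  intro a πhat μhat Ahat Q hopt ρ m S hρ hρ1 hS
  have hak : ∀ k, 0 < a k := ha
  have hN0 : (0:ℝ) < (N:ℝ) := by exact_mod_cast Nat.lt_of_lt_of_le Nat.zero_lt_one hN
  have hN0' : (N:ℝ) ≠ 0 := ne_of_gt hN0
  have hsumA : ∑ k, a k = ∑ n, w n := by
    show ∑ k, ∑ n, γ k n * w n = ∑ n, w n
    rw [Finset.sum_comm]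
    apply Finset.sum_congr rfl; intro n _
    rw [← Finset.sum_mul, hγ1 n, one_mul]
  -- key rewrite of Q
  have key : ∀ (ρ' : Fin K → ℝ) (m' : Fin K → Fin p → ℝ)
      (S' : Fin K → Matrix (Fin p) (Fin p) ℝ), (∀ k, (S' k).PosDef) →
      Q ρ' m' S' = (1 / (N:ℝ)) * ∑ k, a k * Real.log (ρ' k)
        + ∑ k, (a k * ((-(p:ℝ)/2) * Real.log (2*Real.pi)) / N
          + (a k / (2*N)) * (Real.log (S' k).det - ((S' k) * Ahat k).trace
              - (2*N*lam / a k) * offDiagL1 p (S' k))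
          - (a k / (2*N)) * ((μhat k - m' k) ⬝ᵥ (S' k) *ᵥ (μhat k - m' k))) := by
    intro ρ' m' S' hS'
    have hQdef : Q ρ' m' S' = (1 / (N : ℝ)) * (∑ n, ∑ k,
        γ k n * (Real.log (ρ' k) + Real.log (gaussDensity p (m' k) (S' k) (x n))) * w n)
        - lam * ∑ k, offDiagL1 p (S' k) := rfl
    have inner : ∀ k, ∑ n,
        γ k n * (Real.log (ρ' k) + Real.log (gaussDensity p (m' k) (S' k) (x n))) * w n
        = a k * Real.log (ρ' k) + a k * ((-(p:ℝ)/2) * Real.log (2*Real.pi))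
          + (a k / 2) * Real.log (S' k).det
          - (1/2) * (a k * ((S' k) * Ahat k).trace
              + a k * ((μhat k - m' k) ⬝ᵥ (S' k) *ᵥ (μhat k - m' k))) := by
      intro k
      have quad := quad_decomp_aux p N (fun n => γ k n * w n) (a k) rfl (hak k) x
        (μhat k) rfl (Ahat k) rfl (m' k) (S' k)
      calc ∑ n, γ k n * (Real.log (ρ' k)
              + Real.log (gaussDensity p (m' k) (S' k) (x n))) * w n
          = ∑ n, ((Real.log (ρ' k) + (-(p:ℝ)/2) * Real.log (2*Real.pi)
                + (1/2) * Real.log (S' k).det) * (γ k n * w n)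
              - (1/2) * ((γ k n * w n) * ((x n - m' k) ⬝ᵥ (S' k) *ᵥ (x n - m' k)))) := by
            apply Finset.sum_congr rfl; intro n _
            rw [log_gauss_aux p (m' k) (S' k) (hS' k) (x n)]
            ring
        _ = (Real.log (ρ' k) + (-(p:ℝ)/2) * Real.log (2*Real.pi)
              + (1/2) * Real.log (S' k).det) * (∑ n, γ k n * w n)
            - (1/2) * ∑ n, (γ k n * w n) * ((x n - m' k) ⬝ᵥ (S' k) *ᵥ (x n - m' k)) := by
            rw [Finset.sum_sub_distrib, ← Finset.mul_sum, ← Finset.mul_sum]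
        _ = _ := by
            rw [show (∑ n, γ k n * w n) = a k from rfl, quad]
            ring
    rw [hQdef, Finset.sum_comm, Finset.sum_congr rfl (fun k _ => inner k)]
    rw [Finset.mul_sum, Finset.mul_sum, ← Finset.sum_sub_distrib, Finset.mul_sum,
      ← Finset.sum_add_distrib]
    apply Finset.sum_congr rfl; intro k _
    have hak0 : a k ≠ 0 := ne_of_gt (hak k)
    field_simp
    ring
  rw [key ρ m S hS, key πhat μhat Θhat (fun k => (hopt k).1)]
  have hgibbs : ∑ k, a k * Real.log (ρ k) ≤ ∑ k, a k * Real.log (πhat k) := by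
    have := gibbs_aux K a ρ (∑ n, w n) hW hak hρ hρ1 hsumA
    exact this
  have h1 : (1 / (N:ℝ)) * ∑ k, a k * Real.log (ρ k)
      ≤ (1 / (N:ℝ)) * ∑ k, a k * Real.log (πhat k) :=
    mul_le_mul_of_nonneg_left hgibbs (by positivity)
  have h2 : ∑ k, (a k * ((-(p:ℝ)/2) * Real.log (2*Real.pi)) / N
        + (a k / (2*N)) * (Real.log (S k).det - ((S k) * Ahat k).trace
            - (2*N*lam / a k) * offDiagL1 p (S k))
        - (a k / (2*N)) * ((μhat k - m k) ⬝ᵥ (S k) *ᵥ (μhat k - m k)))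
      ≤ ∑ k, (a k * ((-(p:ℝ)/2) * Real.log (2*Real.pi)) / N
        + (a k / (2*N)) * (Real.log (Θhat k).det - ((Θhat k) * Ahat k).trace
            - (2*N*lam / a k) * offDiagL1 p (Θhat k))
        - (a k / (2*N)) * ((μhat k - μhat k) ⬝ᵥ (Θhat k) *ᵥ (μhat k - μhat k))) := by
    apply Finset.sum_le_sum
    intro k _
    have hcoef : 0 ≤ a k / (2*N) := le_of_lt (div_pos (hak k) (by positivity))
    have hmid : (a k / (2*N)) * (Real.log (S k).det - ((S k) * Ahat k).trace
          - (2*N*lam / a k) * offDiagL1 p (S k))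
        ≤ (a k / (2*N)) * (Real.log (Θhat k).det - ((Θhat k) * Ahat k).trace
          - (2*N*lam / a k) * offDiagL1 p (Θhat k)) :=
      mul_le_mul_of_nonneg_left ((hopt k).2 (S k) (hS k)) hcoef
    have hq0 : (μhat k - μhat k) ⬝ᵥ (Θhat k) *ᵥ (μhat k - μhat k) = 0 := by
      simp [sub_self]
    have hqpos : 0 ≤ (μhat k - m k) ⬝ᵥ (S k) *ᵥ (μhat k - m k) := by
      rcases eq_or_ne (μhat k - m k) 0 with h | h
      · simp [h]
      · have := (hS k).dotProduct_mulVec_pos h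
        simpa using this.le
    rw [hq0]
    nlinarith [mul_le_mul_of_nonneg_left hqpos hcoef]
  linarith
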